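/- Let p ∈ ℝ[x₁,…,xₙ] with homogeneous decomposition p = Σ_{i=0}^d p_i (each p_i homogeneous of degree i), suppose the real zero set of the top component satisfies Z_{ℝⁿ}(p_d) = {0} and that M := Z_{ℝⁿ}(p) is nonempty. Define q(x,a) := Σ_{i=0}^d (1−a²)^{d−i} p_i(x) and φ : ℝⁿ × ℝ → ℝⁿ × ℝ by φ(x,a) := ((1−a²)x, a). Then the real zero set of q in ℝ^{n+1} equals φ(M × ℝ): Z_{ℝ^{n+1}}(q) = φ(Z_{ℝⁿ}(p) × ℝ). -/
import Mathlib


open Set Function MvPolynomial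

noncomputable section

lemma eval_smul_homog {n i : ℕ} {f : MvPolynomial (Fin n) ℝ} (hf : f.IsHomogeneous i)
    (c : ℝ) (x : Fin n → ℝ) : eval (c • x) f = c ^ i * eval x f := by
  rw [eval_eq, eval_eq, Finset.mul_sum]
  refine Finset.sum_congr rfl fun d hd => ?_
  have hdeg : ∑ j ∈ d.support, d j = i := by
    simpa [Finsupp.weight_apply, Finsupp.sum] using hf (mem_support_iff.mp hd)
  have : ∏ j ∈ d.support, (c • x) j ^ d j
      = (∏ j ∈ d.support, c ^ d j) * ∏ j ∈ d.support, x j ^ d j := by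
    rw [← Finset.prod_mul_distrib]; simp [mul_pow]
  rw [this, Finset.prod_pow_eq_pow_sum, hdeg]; ring

/-- **Example 2.6(2), the image is algebraic.** Let `p ∈ ℝ[x₁,…,xₙ]` with homogeneous
decomposition `p = Σ_{i=0}^d pᵢ`, suppose that `p` is overt, i.e. the real zero set of the
top component satisfies `Z(p_d) = {0}`, and that `M := Z(p)` is nonempty. Let
`q(x,a) := Σ_{i=0}^d (1−a²)^{d−i} pᵢ(x)` and `φ(x,a) := ((1−a²)x, a)`. Then
`Z_{ℝ^{n+1}}(q) = φ(Z_{ℝⁿ}(p) × ℝ)`. -/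
theorem pinch_image_is_algebraic {n d : ℕ}
    (p : MvPolynomial (Fin n) ℝ) (pc : ℕ → MvPolynomial (Fin n) ℝ)
    (hsum : p = ∑ i ∈ Finset.range (d + 1), pc i)
    (hhom : ∀ i ∈ Finset.range (d + 1), (pc i).IsHomogeneous i)
    (hovert : {x : Fin n → ℝ | eval x (pc d) = 0} = {0})
    (hM : {x : Fin n → ℝ | eval x p = 0}.Nonempty) :
    {z : (Fin n → ℝ) × ℝ |
        ∑ i ∈ Finset.range (d + 1), (1 - z.2 ^ 2) ^ (d - i) * eval z.1 (pc i) = 0} =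
      (fun w : (Fin n → ℝ) × ℝ => ((1 - w.2 ^ 2) • w.1, w.2)) ''
        ({x : Fin n → ℝ | eval x p = 0} ×ˢ univ) := by
  have key : ∀ (c : ℝ) (x : Fin n → ℝ),
      ∑ i ∈ Finset.range (d + 1), c ^ (d - i) * eval (c • x) (pc i)
        = c ^ d * eval x p := by
    intro c x
    rw [hsum, map_sum, Finset.mul_sum]
    refine Finset.sum_congr rfl fun i hi => ?_
    rw [eval_smul_homog (hhom i hi) c x, ← mul_assoc, ← pow_add,
      Nat.sub_add_cancel (Nat.lt_succ_iff.mp (Finset.mem_range.mp hi))]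
  ext ⟨y, a⟩
  simp only [mem_setOf_eq, mem_image, mem_prod, mem_univ, and_true, Prod.mk.injEq,
    Prod.exists]
  constructor
  · intro hq
    by_cases hc : (1 : ℝ) - a ^ 2 = 0
    · -- q(y,a) = pd(y)
      have hy : eval y (pc d) = 0 := by
        have := hq
        rw [Finset.sum_range_succ] at this
        simp only [hc] at this
        rw [Finset.sum_eq_zero (fun i hi => by
          rw [zero_pow (Nat.sub_ne_zero_of_lt (Finset.mem_range.mp hi)), zero_mul])] at this
        simpa using this
      have hy0 : y = 0 := by
        have : y ∈ ({0} : Set (Fin n → ℝ)) := hovert ▸ hy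
        simpa using this
      obtain ⟨x₀, hx₀⟩ := hM
      exact ⟨x₀, a, hx₀, by simp [hc, hy0], rfl⟩
    · set c := (1 : ℝ) - a ^ 2
      refine ⟨c⁻¹ • y, a, ?_, ?_, rfl⟩
      · have h1 : c • (c⁻¹ • y) = y := by
          rw [smul_smul, mul_inv_cancel₀ hc, one_smul]
        have := key c (c⁻¹ • y)
        rw [h1, hq] at this
        have := this.symm
        rcases mul_eq_zero.mp this with h | h
        · exact absurd (pow_eq_zero_iff'.mp h).1 hc
        · exact h
      · rw [smul_smul, mul_inv_cancel₀ hc, one_smul]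
  · rintro ⟨x, b, hx, hy, rfl⟩
    subst hy
    rw [key, hx, mul_zero]
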